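/- arXiv:2103.15471 — 2 statements merged into one kernel-verified Lean document; each statement's English description precedes it below -/
import Mathlib

section
/- Let F be a field, r ≥ 1, and λ_1, ..., λ_r distinct elements of F. Let α = s̄^m and define block matrices H_{t,i} ∈ F^{α×α} (t ∈ [0,r-1], i ∈ [r]) such that H_{t,i} has diagonal entries λ_i^t and all nonzero off-diagonal entries H_{t,i}(a,b) occur only when b = a(τ_i, v) for some v ∈ [1, s̄-1] with the τ_i-th base-s̄ digit of a equal to 0 (where τ_i ∈ [0, m-1] depends on i). Then the rα × rα matrix H whose (t,i) block is H_{t,i} is invertible. -/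
/-- the τ-th digit of `a` in base `s`. -/
def digit (s a τ : ℕ) : ℕ := a / s ^ τ % s

/-- replace the τ-th base-`s` digit of `a` by `v`. -/
def replaceDigit (s a τ v : ℕ) : ℕ := a - digit s a τ * s ^ τ + v * s ^ τ

namespace BMI

variable {s a τ v : ℕ}

lemma repl_eq (h0 : digit s a τ = 0) : replaceDigit s a τ v = a + v * s ^ τ := by
  simp [replaceDigit, h0]

lemma mod_lt_pow (hs : 2 ≤ s) (h0 : digit s a τ = 0) : a % s ^ (τ + 1) < s ^ τ := by
  have h : a % s ^ (τ + 1) / s ^ τ = a / s ^ τ % s := by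
    rw [pow_succ]; exact Nat.mod_mul_right_div_self a (s ^ τ) s
  have h0' : a % s ^ (τ + 1) / s ^ τ = 0 := by rw [h]; exact h0
  exact (Nat.div_eq_zero_iff.mp h0').resolve_left (pow_pos (by omega) τ).ne'

lemma rem_bound (hs : 2 ≤ s) (h0 : digit s a τ = 0) (hv : v ≤ s - 1) :
    a % s ^ (τ + 1) + v * s ^ τ < s ^ (τ + 1) := by
  have hmod := mod_lt_pow hs h0
  have h1 : v * s ^ τ ≤ (s - 1) * s ^ τ := Nat.mul_le_mul_right _ hv
  have hps : s ^ (τ + 1) = s ^ τ * s := pow_succ s τ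
  have h3 : (s - 1) * s ^ τ + s ^ τ = s ^ τ * s := by
    have hss : s - 1 + 1 = s := by omega
    calc (s - 1) * s ^ τ + s ^ τ = (s - 1 + 1) * s ^ τ := by ring
      _ = s ^ τ * s := by rw [hss]; ring
  omega

lemma div_succ_eq (hs : 2 ≤ s) (h0 : digit s a τ = 0) (hv : v ≤ s - 1) :
    (a + v * s ^ τ) / s ^ (τ + 1) = a / s ^ (τ + 1) := by
  have hrem := rem_bound hs h0 hv
  have hdecomp : a = a % s ^ (τ + 1) + a / s ^ (τ + 1) * s ^ (τ + 1) :=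
    (Nat.mod_add_div' a (s ^ (τ + 1))).symm
  calc (a + v * s ^ τ) / s ^ (τ + 1)
      = (a % s ^ (τ + 1) + v * s ^ τ + (a / s ^ (τ + 1)) * s ^ (τ + 1)) / s ^ (τ + 1) := by
        congr 1; omega
    _ = (a % s ^ (τ + 1) + v * s ^ τ) / s ^ (τ + 1) + a / s ^ (τ + 1) := by
        rw [Nat.add_mul_div_right _ _ (pow_pos (by omega) _)]
    _ = a / s ^ (τ + 1) := by rw [Nat.div_eq_of_lt hrem, Nat.zero_add]

lemma digit_repl_self (hs : 2 ≤ s) (h0 : digit s a τ = 0) (hv : v ≤ s - 1) :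
    digit s (a + v * s ^ τ) τ = v := by
  have hsτ : 0 < s ^ τ := pow_pos (by omega) τ
  have hmod := mod_lt_pow hs h0
  have hdecomp : a = s ^ (τ + 1) * (a / s ^ (τ + 1)) + a % s ^ (τ + 1) :=
    (Nat.div_add_mod a (s ^ (τ + 1))).symm
  have key : (a + v * s ^ τ) / s ^ τ = v + (a / s ^ (τ + 1)) * s := by
    calc (a + v * s ^ τ) / s ^ τ
        = (a % s ^ (τ + 1) + (v + (a / s ^ (τ + 1)) * s) * s ^ τ) / s ^ τ := by
          congr 1; rw [pow_succ] at hdecomp; ring_nf; ring_nf at hdecomp; omega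
      _ = a % s ^ (τ + 1) / s ^ τ + (v + (a / s ^ (τ + 1)) * s) := by
          rw [Nat.add_mul_div_right _ _ hsτ]
      _ = v + (a / s ^ (τ + 1)) * s := by rw [Nat.div_eq_of_lt hmod, Nat.zero_add]
  rw [digit, key, Nat.add_mul_mod_self_right, Nat.mod_eq_of_lt (by omega)]

lemma digit_repl_lt (hs : 2 ≤ s) {τ' : ℕ} (hlt : τ' < τ) :
    digit s (a + v * s ^ τ) τ' = digit s a τ' := by
  have hsτ' : 0 < s ^ τ' := pow_pos (by omega) τ'
  have hτeq : s ^ τ = s ^ (τ - τ' - 1) * s * s ^ τ' := by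
    rw [mul_assoc, ← pow_succ']
    rw [← pow_add]; congr 1; omega
  rw [digit, digit, hτeq]
  have h2 : a + v * (s ^ (τ - τ' - 1) * s * s ^ τ') = a + v * (s ^ (τ - τ' - 1) * s) * s ^ τ' := by
    ring
  rw [h2, Nat.add_mul_div_right _ _ hsτ', ← mul_assoc, Nat.add_mul_mod_self_right]

lemma digit_repl_gt (hs : 2 ≤ s) (h0 : digit s a τ = 0) (hv : v ≤ s - 1) {τ' : ℕ}
    (hgt : τ < τ') : digit s (a + v * s ^ τ) τ' = digit s a τ' := by
  have hk : τ' = (τ + 1) + (τ' - τ - 1) := by omega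
  rw [digit, digit, hk, pow_add, ← Nat.div_div_eq_div_mul, ← Nat.div_div_eq_div_mul,
    div_succ_eq hs h0 hv]

/-- number of zero digits of `a` among positions `0..m-1`. -/
def zw (s m a : ℕ) : ℕ := ((Finset.range m).filter (fun t => digit s a t = 0)).card

lemma zw_lt (hs : 2 ≤ s) {m : ℕ} (hτm : τ < m) (h0 : digit s a τ = 0) (hv1 : 1 ≤ v)
    (hv : v ≤ s - 1) :
    zw s m (a + v * s ^ τ) < zw s m a := by
  apply Finset.card_lt_card
  constructor
  · intro t ht
    simp only [Finset.mem_filter, Finset.mem_range] at ht ⊢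
    refine ⟨ht.1, ?_⟩
    rcases lt_trichotomy t τ with h | h | h
    · rw [← digit_repl_lt hs h]; exact ht.2
    · exfalso; subst h; rw [digit_repl_self hs h0 hv] at ht; omega
    · rw [← digit_repl_gt hs h0 hv h]; exact ht.2
  · intro hsub
    have hτin : τ ∈ (Finset.range m).filter (fun t => digit s a t = 0) := by
      simp only [Finset.mem_filter, Finset.mem_range]; exact ⟨hτm, h0⟩
    have := hsub hτin
    simp only [Finset.mem_filter, Finset.mem_range] at this
    rw [digit_repl_self hs h0 hv] at this; omega

/-- grading key -/
def key (s m : ℕ) {r : ℕ} (p : Fin r × Fin (s ^ m)) : ℤ :=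
  -((zw s m (p.2 : ℕ) * s ^ m + (p.2 : ℕ) : ℕ) : ℤ)

lemma key_snd {s m r : ℕ} (hs : 2 ≤ s) {p q : Fin r × Fin (s ^ m)}
    (h : key s m p = key s m q) : p.2 = q.2 := by
  have h' : zw s m (p.2 : ℕ) * s ^ m + (p.2 : ℕ)
      = zw s m (q.2 : ℕ) * s ^ m + (q.2 : ℕ) := by
    have := neg_injective h
    exact_mod_cast this
  have hp := p.2.isLt; have hq := q.2.isLt
  apply Fin.ext
  have h2 : ∀ (w n : ℕ), n < s ^ m → (w * s ^ m + n) % s ^ m = n := fun w n hn => by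
    rw [Nat.mul_comm, Nat.mul_add_mod, Nat.mod_eq_of_lt hn]
  have h1 := congrArg (· % s ^ m) h'
  simpa [h2 _ _ hp, h2 _ _ hq] using h1

lemma key_lt {s m r : ℕ} {p q : Fin r × Fin (s ^ m)}
    (h : zw s m (q.2 : ℕ) < zw s m (p.2 : ℕ)) : key s m p < key s m q := by
  have hq := q.2.isLt
  have hnat : zw s m (q.2 : ℕ) * s ^ m + (q.2 : ℕ)
      < zw s m (p.2 : ℕ) * s ^ m + (p.2 : ℕ) := by
    calc zw s m (q.2 : ℕ) * s ^ m + (q.2 : ℕ)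
        < zw s m (q.2 : ℕ) * s ^ m + s ^ m := by omega
      _ = (zw s m (q.2 : ℕ) + 1) * s ^ m := by ring
      _ ≤ zw s m (p.2 : ℕ) * s ^ m := Nat.mul_le_mul_right _ (by omega)
      _ ≤ _ := Nat.le_add_right _ _
  rw [key, key, neg_lt_neg_iff]
  exact_mod_cast hnat

end BMI

theorem block_matrix_invertible
    (F : Type*) [Field F] (r sbar m : ℕ) (hr : 1 ≤ r) (hs : 2 ≤ sbar) (hm : 1 ≤ m)
    (lam : Fin r → F) (hlam : Function.Injective lam)
    (τ : Fin r → ℕ) (hτ : ∀ i, τ i < m)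
    (Hmat : Fin r → Fin r → Matrix (Fin (sbar ^ m)) (Fin (sbar ^ m)) F)
    (hdiag : ∀ t i a, Hmat t i a a = lam i ^ (t : ℕ))
    (hoff : ∀ t i (a b : Fin (sbar ^ m)), a ≠ b → Hmat t i a b ≠ 0 →
      digit sbar (a : ℕ) (τ i) = 0 ∧
      ∃ v, 1 ≤ v ∧ v ≤ sbar - 1 ∧ (b : ℕ) = replaceDigit sbar (a : ℕ) (τ i) v) :
    (Matrix.of fun (p q : Fin r × Fin (sbar ^ m)) => Hmat p.1 q.1 p.2 q.2).det ≠ 0 := by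
  classical
  set M : Matrix (Fin r × Fin (sbar ^ m)) (Fin r × Fin (sbar ^ m)) F :=
    Matrix.of fun p q => Hmat p.1 q.1 p.2 q.2 with hMdef
  have hBT : M.BlockTriangular (BMI.key sbar m) := by
    intro p q hlt
    by_contra hne0
    have hne : p.2 ≠ q.2 := by
      intro h
      have : BMI.key sbar m p = BMI.key sbar m q := by rw [BMI.key, BMI.key, h]
      rw [this] at hlt; exact lt_irrefl _ hlt
    have hne0' : Hmat p.1 q.1 p.2 q.2 ≠ 0 := hne0
    obtain ⟨h0, v, hv1, hv2, hb⟩ := hoff p.1 q.1 p.2 q.2 hne hne0'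
    rw [BMI.repl_eq h0] at hb
    have hzw : BMI.zw sbar m (q.2 : ℕ) < BMI.zw sbar m (p.2 : ℕ) := by
      rw [hb]; exact BMI.zw_lt hs (hτ q.1) h0 hv1 hv2
    exact absurd hlt (not_lt.mpr (BMI.key_lt hzw).le)
  rw [hBT.det, Finset.prod_ne_zero_iff]
  intro k hk
  obtain ⟨p₀, -, hp₀⟩ := Finset.mem_image.mp hk
  have hkey0 : ∀ t : Fin r, BMI.key sbar m (t, p₀.2) = k := fun t => by
    rw [← hp₀]; rfl
  let e : Fin r ≃ {p : Fin r × Fin (sbar ^ m) // BMI.key sbar m p = k} :=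
    { toFun := fun t => ⟨(t, p₀.2), hkey0 t⟩
      invFun := fun p => p.1.1
      left_inv := fun t => rfl
      right_inv := fun p => by
        apply Subtype.ext
        have h2 : p.1.2 = p₀.2 := BMI.key_snd hs (by rw [p.2, hp₀])
        show (p.1.1, p₀.2) = p.1
        rw [← h2] }
  rw [← Matrix.det_submatrix_equiv_self e]
  have hVeq : (M.toSquareBlock (BMI.key sbar m) k).submatrix e e = (Matrix.vandermonde lam).transpose := by
    ext t t'
    show M (t, p₀.2) (t', p₀.2) = lam t' ^ (t : ℕ)
    exact hdiag t t' p₀.2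
  rw [hVeq, Matrix.det_transpose, Matrix.det_vandermonde]
  rw [Finset.prod_ne_zero_iff]
  intro i _
  rw [Finset.prod_ne_zero_iff]
  intro j hj
  have hij : j ≠ i := (Finset.mem_Ioi.mp hj).ne'
  exact sub_ne_zero.mpr (fun h => hij (hlam h))
end

section
/- Let F be a field, and suppose an (n,k;α) array code C defined by parity-check equations Σ_{e,g} H_{(e,g)} c_{(e,g)}^T = 0 admits, for a fixed rack index e*, a matrix S ∈ F^{r̄β × rα} satisfying: (a) S·H_{(e*,g)} = P_{e*} Q_{(e*,g)} with Q_{(e*,g)} invertible α×α matrices and P_{e*} ∈ F^{r̄β×α}; (b) for e ≠ e*, S·H_{(e,g)} = P_e R_e Q_{(e,g)} with P_e ∈ F^{r̄β×β}, R_e ∈ F^{β×α}; (c) for any choice of n̄ - d̄ - 1 racks e_1,...,e_{n̄-d̄-1} ≠ e*, the matrix (P_{e*} | P_{e_1} | ... | P_{e_{n̄-d̄-1}}) ∈ F^{r̄β×r̄β} is invertible. Then for any set H of d̄ racks not containing e*, the vector c̃_{e*} := Σ_g Q_{(e*,g)} c_{(e*,g)}^T is determined by the vectors {R_e Σ_g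 Q_{(e,g)} c_{(e,g)}^T : e ∈ H}, each of which lies in F^β. -/
private lemma mv_sum {F : Type*} [Field F] {m n ι : Type*} [Fintype n]
    (A : Matrix m n F) (s : Finset ι) (f : ι → n → F) :
    A.mulVec (∑ i ∈ s, f i) = ∑ i ∈ s, A.mulVec (f i) := by
  ext j
  simp [Matrix.mulVec, dotProduct, Finset.mul_sum, Finset.sum_apply]
  rw [Finset.sum_comm]

theorem repair_framework
    (F : Type*) [Field F] (nbar u kbar dbar u0 α β : ℕ)
    (hu : 1 ≤ u) (hu0 : u0 < u) (hkd : kbar ≤ dbar) (hdn : dbar ≤ nbar - 1)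
    (hkn : kbar < nbar) (hβ : 1 ≤ β) (hβα : β * (dbar - kbar + 1) = α)
    (Hm : Fin nbar × Fin u → Matrix (Fin ((nbar * u - (kbar * u + u0)) * α)) (Fin α) F)
    (estar : Fin nbar)
    (S : Matrix (Fin ((nbar - kbar) * β)) (Fin ((nbar * u - (kbar * u + u0)) * α)) F)
    (Pstar : Matrix (Fin ((nbar - kbar) * β)) (Fin α) F)
    (P : Fin nbar → Matrix (Fin ((nbar - kbar) * β)) (Fin β) F)
    (R : Fin nbar → Matrix (Fin β) (Fin α) F)
    (Q : Fin nbar × Fin u → Matrix (Fin α) (Fin α) F)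
    (ha : ∀ g, S * Hm (estar, g) = Pstar * Q (estar, g))
    (haQ : ∀ g, IsUnit (Q (estar, g)))
    (hb : ∀ e, e ≠ estar → ∀ g, S * Hm (e, g) = P e * R e * Q (e, g))
    (hc : ∀ f : Fin (nbar - dbar - 1) → Fin nbar, Function.Injective f →
      (∀ i, f i ≠ estar) →
      ∀ x : Fin α ⊕ (Fin (nbar - dbar - 1) × Fin β) → F,
        (∀ p, (∑ a, Pstar p a * x (Sum.inl a)) +
          ∑ q : Fin (nbar - dbar - 1) × Fin β, P (f q.1) p q.2 * x (Sum.inr q) = 0) →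
        x = 0)
    (Hset : Finset (Fin nbar)) (hH : Hset.card = dbar) (hHe : estar ∉ Hset)
    (c c' : Fin nbar × Fin u → Fin α → F)
    (hcpar : ∑ i, (Hm i).mulVec (c i) = 0)
    (hc'par : ∑ i, (Hm i).mulVec (c' i) = 0)
    (hdown : ∀ e ∈ Hset,
      (R e).mulVec (∑ g, (Q (e, g)).mulVec (c (e, g))) =
      (R e).mulVec (∑ g, (Q (e, g)).mulVec (c' (e, g)))) :
    ∑ g, (Q (estar, g)).mulVec (c (estar, g)) =
      ∑ g, (Q (estar, g)).mulVec (c' (estar, g)) := by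
  classical
  -- difference codeword
  set d : Fin nbar × Fin u → Fin α → F := fun i => c i - c' i with hd
  set ct : Fin nbar → Fin α → F := fun e => ∑ g, (Q (e, g)).mulVec (d (e, g)) with hct
  have hctdiff : ∀ e, ct e = (∑ g, (Q (e, g)).mulVec (c (e, g)))
      - ∑ g, (Q (e, g)).mulVec (c' (e, g)) := by
    intro e
    rw [hct, ← Finset.sum_sub_distrib]
    exact Finset.sum_congr rfl fun g _ => by rw [← Matrix.mulVec_sub]
  -- parity of the difference
  have hdiff : ∑ i, (Hm i).mulVec (d i) = 0 := by
    have : ∑ i, (Hm i).mulVec (d i)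
        = ∑ i, (Hm i).mulVec (c i) - ∑ i, (Hm i).mulVec (c' i) := by
      rw [← Finset.sum_sub_distrib]
      exact Finset.sum_congr rfl fun i _ => by rw [← Matrix.mulVec_sub]
    rw [this, hcpar, hc'par, sub_zero]
  -- key relation after multiplying by S
  have hkey : Pstar.mulVec (ct estar)
      + ∑ e ∈ ({estar}ᶜ : Finset (Fin nbar)), (P e).mulVec ((R e).mulVec (ct e)) = 0 := by
    have h0 : S.mulVec (∑ i, (Hm i).mulVec (d i)) = 0 := by
      rw [hdiff, Matrix.mulVec_zero]
    rw [mv_sum] at h0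
    have h1 : ∑ i : Fin nbar × Fin u, S.mulVec ((Hm i).mulVec (d i))
        = ∑ e : Fin nbar, ∑ g : Fin u, (S * Hm (e, g)).mulVec (d (e, g)) := by
      rw [Fintype.sum_prod_type]
      exact Finset.sum_congr rfl fun e _ => Finset.sum_congr rfl fun g _ =>
        Matrix.mulVec_mulVec _ _ _
    rw [h1, ← Finset.sum_compl_add_sum {estar}] at h0
    have h2 : ∑ g : Fin u, (S * Hm (estar, g)).mulVec (d (estar, g))
        = Pstar.mulVec (ct estar) := by
      rw [hct, mv_sum]
      exact Finset.sum_congr rfl fun g _ => by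
        rw [ha g, ← Matrix.mulVec_mulVec]
    have h3 : ∀ e ∈ ({estar}ᶜ : Finset (Fin nbar)),
        ∑ g : Fin u, (S * Hm (e, g)).mulVec (d (e, g))
          = (P e).mulVec ((R e).mulVec (ct e)) := by
      intro e he
      have hne : e ≠ estar := by simpa using he
      rw [hct, mv_sum, mv_sum]
      exact Finset.sum_congr rfl fun g _ => by
        rw [hb e hne g, ← Matrix.mulVec_mulVec, ← Matrix.mulVec_mulVec]
    rw [Finset.sum_singleton, h2, Finset.sum_congr rfl h3, add_comm] at h0
    exact h0
  -- terms in Hset vanish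
  have hHzero : ∀ e ∈ Hset, (P e).mulVec ((R e).mulVec (ct e)) = 0 := by
    intro e he
    have : (R e).mulVec (ct e) = 0 := by
      rw [hctdiff e, Matrix.mulVec_sub, hdown e he, sub_self]
    rw [this, Matrix.mulVec_zero]
  -- split off Hset
  have hHsub : Hset ⊆ ({estar}ᶜ : Finset (Fin nbar)) := by
    intro e he
    simp only [Finset.mem_compl, Finset.mem_singleton]
    rintro rfl; exact hHe he
  set T : Finset (Fin nbar) := ({estar}ᶜ : Finset (Fin nbar)) \ Hset with hT
  have hsplit : ∑ e ∈ ({estar}ᶜ : Finset (Fin nbar)), (P e).mulVec ((R e).mulVec (ct e))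
      = ∑ e ∈ T, (P e).mulVec ((R e).mulVec (ct e)) := by
    rw [← Finset.sum_sdiff hHsub, Finset.sum_eq_zero hHzero, add_zero]
  rw [hsplit] at hkey
  -- cardinality of T
  have hTcard : T.card = nbar - dbar - 1 := by
    have h1 : ({estar}ᶜ : Finset (Fin nbar)).card = nbar - 1 := by
      rw [Finset.card_compl, Finset.card_singleton, Fintype.card_fin]
    rw [hT, Finset.card_sdiff_of_subset hHsub, h1, hH]
    omega
  -- enumerate T
  set eqv : T ≃ Fin (nbar - dbar - 1) := Finset.equivFinOfCardEq hTcard with heqv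
  set f : Fin (nbar - dbar - 1) → Fin nbar := fun i => ((eqv.symm i : T) : Fin nbar) with hf
  have hfinj : Function.Injective f := by
    intro i j hij
    exact eqv.symm.injective (Subtype.ext hij)
  have hfT : ∀ i, f i ∈ T := fun i => (eqv.symm i).2
  have hfne : ∀ i, f i ≠ estar := by
    intro i
    have := hfT i
    rw [hT, Finset.mem_sdiff, Finset.mem_compl, Finset.mem_singleton] at this
    exact this.1
  -- rewrite the sum over T as a sum over Fin (nbar - dbar - 1)
  have hTsum : ∑ e ∈ T, (P e).mulVec ((R e).mulVec (ct e))
      = ∑ i : Fin (nbar - dbar - 1), (P (f i)).mulVec ((R (f i)).mulVec (ct (f i))) := by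
    rw [← Finset.sum_coe_sort T (fun e => (P e).mulVec ((R e).mulVec (ct e)))]
    exact (Equiv.sum_comp eqv.symm (fun x : T => (P (x : Fin nbar)).mulVec
      ((R (x : Fin nbar)).mulVec (ct (x : Fin nbar))))).symm
  rw [hTsum] at hkey
  -- apply the MDS hypothesis
  set x : Fin α ⊕ (Fin (nbar - dbar - 1) × Fin β) → F :=
    Sum.elim (ct estar) (fun q => (R (f q.1)).mulVec (ct (f q.1)) q.2) with hx
  have hxzero : x = 0 := by
    apply hc f hfinj hfne
    intro p
    have hp := congrFun hkey p
    simp only [Pi.add_apply, Pi.zero_apply, Finset.sum_apply] at hp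
    rw [hx]
    simp only [Sum.elim_inl, Sum.elim_inr]
    rw [Fintype.sum_prod_type]
    convert hp using 2 <;> rfl
  have hct0 : ct estar = 0 := by
    funext a
    have := congrFun hxzero (Sum.inl a)
    simpa [hx] using this
  have := hctdiff estar
  rw [hct0] at this
  exact sub_eq_zero.mp this.symm
end
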